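/- Let T be an ORB-tree with covariance matrix S, v a non-root internal node with children v0 and v1, and λ_v := φ_v' S φ_v. Then λ_v = ρ_{v1}·avg(ℓ*(·,v); L(v0)) + ρ_{v0}·avg(ℓ*(·,v); L(v1)), and ‖(S − λ_v I)φ_v‖₂² = ρ_{v0} ρ_{v1} (avg(ℓ*(·,v); L(v1)) − avg(ℓ*(·,v); L(v0)))² + ρ_{v1}·var(ℓ*(·,v); L(v0)) + ρ_{v0}·var(ℓ*(·,v); L(v1)); consequently dist(λ_v, σ(S)) ≤ ‖(S − λ_v I)φ_v‖₂. -/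

import Mathlib

open Finset

noncomputable section
open scoped Classical

/-- A finite rooted tree on vertices `Fin n`, given by a parent function:
every vertex reaches the root by iterating `parent`, and the root is its own parent. -/
structure RTree where
  n : ℕ
  npos : 0 < n
  root : Fin n
  parent : Fin n → Fin n
  parent_root : parent root = root
  reach : ∀ v, ∃ k, parent^[k] v = root

namespace RTree

variable (T : RTree)

/-- `u` is an ancestor of `v` (every vertex is an ancestor of itself). -/
def Anc (u v : Fin T.n) : Prop := ∃ k, T.parent^[k] v = u

/-- The children of a vertex. -/
def children (v : Fin T.n) : Finset (Fin T.n) :=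
  Finset.univ.filter fun u => T.parent u = v ∧ u ≠ T.root

def IsLeaf (v : Fin T.n) : Prop := T.children v = ∅

/-- The leaf set of the tree. -/
def leaves : Finset (Fin T.n) := Finset.univ.filter fun v => T.IsLeaf v

/-- The internal (non-leaf) vertices; the root is internal. -/
def internal : Finset (Fin T.n) := Finset.univ.filter fun v => ¬ T.IsLeaf v

/-- `L(v)`: the leaves descending from `v`. -/
def Ldesc (v : Fin T.n) : Finset (Fin T.n) := T.leaves.filter fun i => T.Anc v i

/-- Depth of a vertex: number of edges to the root. -/
def depth (v : Fin T.n) : ℕ := Nat.find (T.reach v)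

/-- Number of vertices of the subtree rooted at `v`. -/
def subtreeSize (v : Fin T.n) : ℕ := (Finset.univ.filter fun u => T.Anc v u).card

/-- ORB-tree: the root has exactly one child and is not a leaf, and every other
internal vertex has exactly two children (so every vertex has degree 1 or 3). -/
def IsORB : Prop :=
  ¬ T.IsLeaf T.root ∧ (T.children T.root).card = 1 ∧
  ∀ v, ¬ T.IsLeaf v → v ≠ T.root → (T.children v).card = 2

/-- The type of leaves. -/
abbrev Leaf := {i // i ∈ T.leaves}

/-- `δ_e` for the edge `e` above vertex `v`: the indicator vector of the leaves
descending from that edge. -/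
def delta (v : Fin T.n) : T.Leaf → ℝ := fun i => if T.Anc v i.1 then 1 else 0

/-- The covariance matrix of the tree with branch lengths `ℓ`
(`ℓ v` is the length of the edge joining `v` to its parent):
`S = ∑_{e ∈ E} ℓ(e) δ_e δ_e'`.  Equivalently `S(i,j) = ∑_{e ∈ [i∧j,∘]} ℓ(e)`. -/
def cov (ℓ : Fin T.n → ℝ) : Matrix T.Leaf T.Leaf ℝ :=
  ∑ v ∈ Finset.univ.filter (fun v => v ≠ T.root),
    ℓ v • Matrix.vecMulVec (T.delta v) (T.delta v)

/-- The trace branch length `ℓ*(i,v) = ∑_{e ∈ [i,v]} |L(e)| ℓ(e)`; the edge above `w`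
lies on the path between `i` and `v` iff exactly one of `i`, `v` descends from `w`. -/
def lstar (ℓ : Fin T.n → ℝ) (i v : Fin T.n) : ℝ :=
  ∑ w ∈ Finset.univ.filter (fun w => w ≠ T.root ∧
      ((T.Anc w i ∧ ¬ T.Anc w v) ∨ (T.Anc w v ∧ ¬ T.Anc w i))),
    ((T.Ldesc w).card : ℝ) * ℓ w

/-- `φ` is the family of Haar-like wavelets of `T`, indexed by internal vertices. -/
def IsHaarLike (φ : Fin T.n → T.Leaf → ℝ) : Prop :=
  (∀ i, φ T.root i = 1 / Real.sqrt ((T.leaves.card : ℝ))) ∧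
  ∀ v ∈ T.internal, v ≠ T.root → ∃ c₀ c₁, c₀ ≠ c₁ ∧ T.children v = {c₀, c₁} ∧
    ∀ i : T.Leaf, φ v i =
      if i.1 ∈ T.Ldesc c₀ then
        Real.sqrt (((T.Ldesc c₁).card : ℝ) / (((T.Ldesc c₀).card : ℝ) * ((T.Ldesc v).card : ℝ)))
      else if i.1 ∈ T.Ldesc c₁ then
        - Real.sqrt (((T.Ldesc c₀).card : ℝ) / (((T.Ldesc c₁).card : ℝ) * ((T.Ldesc v).card : ℝ)))
      else 0

/-- `T` is trace-balanced (at every non-root internal vertex). -/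
def TraceBalanced (ℓ : Fin T.n → ℝ) : Prop :=
  ∀ v ∈ T.internal, v ≠ T.root → ∀ i ∈ T.Ldesc v, ∀ j ∈ T.Ldesc v,
    T.lstar ℓ i v = T.lstar ℓ j v

end RTree


set_option linter.unusedSectionVars false
set_option maxHeartbeats 1000000

namespace RTree
variable (T : RTree)

lemma anc_refl (v : Fin T.n) : T.Anc v v := ⟨0, rfl⟩

lemma anc_trans {u v w : Fin T.n} (h1 : T.Anc u v) (h2 : T.Anc v w) : T.Anc u w := by
  obtain ⟨k, hk⟩ := h1; obtain ⟨m, hm⟩ := h2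
  exact ⟨k + m, by rw [Function.iterate_add_apply, hm, hk]⟩

lemma iter_root (k : ℕ) : T.parent^[k] T.root = T.root :=
  Function.iterate_fixed T.parent_root k

lemma eq_root_of_anc_root {w : Fin T.n} (h : T.Anc w T.root) : w = T.root := by
  obtain ⟨k, hk⟩ := h; rw [← hk, T.iter_root]

lemma eq_root_of_periodic {v : Fin T.n} {k : ℕ} (hk : 0 < k)
    (h : T.parent^[k] v = v) : v = T.root := by
  obtain ⟨m, hm⟩ := T.reach v
  have h1 : ∀ t, T.parent^[t * k] v = v := by
    intro t; induction t with
    | zero => simp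
    | succ t ih => rw [Nat.succ_mul, Function.iterate_add_apply, h, ih]
  have hmk : m ≤ m * k := Nat.le_mul_of_pos_right m hk
  have h2 : T.parent^[m * k] v = T.root := by
    calc T.parent^[m * k] v = T.parent^[m * k - m] (T.parent^[m] v) := by
          rw [← Function.iterate_add_apply, Nat.sub_add_cancel hmk]
      _ = T.root := by rw [hm, T.iter_root]
  rw [← h1 m, h2]

lemma anc_antisymm {u v : Fin T.n} (h1 : T.Anc u v) (h2 : T.Anc v u) : u = v := by
  obtain ⟨k, hk⟩ := h1; obtain ⟨m, hm⟩ := h2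
  rcases Nat.eq_zero_or_pos (m + k) with h | h
  · have hk0 : k = 0 := by omega
    rw [← hk, hk0]; rfl
  · have hper : T.parent^[m + k] v = v := by
      rw [Function.iterate_add_apply, hk, hm]
    have hv : v = T.root := T.eq_root_of_periodic h hper
    rw [← hk, hv, T.iter_root]

lemma anc_comparable {u w i : Fin T.n} (h1 : T.Anc u i) (h2 : T.Anc w i) :
    T.Anc u w ∨ T.Anc w u := by
  obtain ⟨k, hk⟩ := h1; obtain ⟨m, hm⟩ := h2
  rcases le_total k m with h | h
  · exact Or.inr ⟨m - k, by rw [← hk, ← Function.iterate_add_apply, Nat.sub_add_cancel h, hm]⟩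
  · exact Or.inl ⟨k - m, by rw [← hm, ← Function.iterate_add_apply, Nat.sub_add_cancel h, hk]⟩

lemma mem_children_iff {c v : Fin T.n} :
    c ∈ T.children v ↔ T.parent c = v ∧ c ≠ T.root := by
  simp [children]

lemma exists_child_anc {v w : Fin T.n} (hvr : v ≠ T.root) (h : T.Anc v w) (hne : w ≠ v) :
    ∃ c ∈ T.children v, T.Anc c w := by
  obtain ⟨k, hk⟩ := h
  cases k with
  | zero => exact absurd hk hne
  | succ k =>
    refine ⟨T.parent^[k] w, ?_, ⟨k, rfl⟩⟩
    have hp : T.parent (T.parent^[k] w) = v := by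
      have h2 := Function.iterate_succ_apply' T.parent k w
      rw [hk] at h2
      exact h2.symm
    refine (T.mem_children_iff).2 ⟨hp, ?_⟩
    intro hr
    exact hvr (by rw [← hp, hr, T.parent_root])

lemma mem_Ldesc_iff {i v : Fin T.n} : i ∈ T.Ldesc v ↔ T.IsLeaf i ∧ T.Anc v i := by
  simp [Ldesc, leaves]

lemma not_anc_sibling {v c₀ c₁ : Fin T.n} (hvr : v ≠ T.root)
    (h0 : T.parent c₀ = v) (h1 : T.parent c₁ = v) (hne : c₀ ≠ c₁) : ¬ T.Anc c₀ c₁ := by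
  rintro ⟨k, hk⟩
  cases k with
  | zero => exact hne hk.symm
  | succ k =>
    have hc : c₀ = T.parent^[k] v := by
      rw [← hk, Function.iterate_succ_apply, h1]
    have : T.parent^[k + 1] v = v := by
      rw [Function.iterate_succ_apply', ← hc, h0]
    exact hvr (T.eq_root_of_periodic (Nat.succ_pos k) this)

lemma ldesc_nonempty : ∀ v : Fin T.n, (T.Ldesc v).Nonempty := by
  suffices H : ∀ N (v : Fin T.n), (univ.filter (T.Anc v)).card ≤ N → (T.Ldesc v).Nonempty by
    intro v; exact H _ v le_rfl
  intro N
  induction N with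
  | zero =>
    intro v h
    exfalso
    have : v ∈ univ.filter (T.Anc v) := by simp [T.anc_refl]
    have := Finset.card_pos.2 ⟨v, this⟩
    omega
  | succ N ih =>
    intro v h
    by_cases hl : T.IsLeaf v
    · exact ⟨v, T.mem_Ldesc_iff.2 ⟨hl, T.anc_refl v⟩⟩
    · have hch : (T.children v).Nonempty := Finset.nonempty_iff_ne_empty.2 hl
      obtain ⟨c, hc⟩ := hch
      obtain ⟨hp, hcr⟩ := T.mem_children_iff.1 hc
      have hvc : T.Anc v c := ⟨1, by simp [hp]⟩
      have hne : c ≠ v := by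
        intro he
        have hper : T.parent^[1] c = c := by
          simp only [Function.iterate_one, hp]; exact he.symm
        exact hcr (T.eq_root_of_periodic Nat.one_pos hper)
      have hsub : univ.filter (T.Anc c) ⊂ univ.filter (T.Anc v) := by
        constructor
        · intro u hu
          simp only [mem_filter, mem_univ, true_and] at hu ⊢
          exact T.anc_trans hvc hu
        · intro hsub'
          have hv : v ∈ univ.filter (T.Anc c) := hsub' (by simp [T.anc_refl])
          simp only [mem_filter, mem_univ, true_and] at hv
          exact hne (T.anc_antisymm hv hvc)
      have hcard : (univ.filter (T.Anc c)).card ≤ N := by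
        have := Finset.card_lt_card hsub
        omega
      obtain ⟨i, hi⟩ := ih c hcard
      rw [T.mem_Ldesc_iff] at hi
      exact ⟨i, T.mem_Ldesc_iff.2 ⟨hi.1, T.anc_trans hvc hi.2⟩⟩

end RTree

namespace RTree
variable {T : RTree} {ℓ : Fin T.n → ℝ} {v c₀ c₁ : Fin T.n}

lemma anc_parent_cases {w c u : Fin T.n} (hp : T.parent c = u) (h : T.Anc w c) :
    w = c ∨ T.Anc w u := by
  obtain ⟨k, hk⟩ := h
  cases k with
  | zero => exact Or.inl hk.symm
  | succ k =>
    right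
    exact ⟨k, by rw [← hk, Function.iterate_succ_apply, hp]⟩

section Children

variable (hvr : v ≠ T.root) (hc : c₀ ≠ c₁) (hch : T.children v = {c₀, c₁})

include hch in
lemma child0_mem : c₀ ∈ T.children v := by rw [hch]; simp

include hch in
lemma child1_mem : c₁ ∈ T.children v := by rw [hch]; simp

include hch in
lemma parent_c0 : T.parent c₀ = v := ((T.mem_children_iff).1 (child0_mem hch)).1

include hch in
lemma parent_c1 : T.parent c₁ = v := ((T.mem_children_iff).1 (child1_mem hch)).1

include hch in
lemma anc_v_c0 : T.Anc v c₀ := ⟨1, by simp [parent_c0 hch]⟩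

include hch in
lemma anc_v_c1 : T.Anc v c₁ := ⟨1, by simp [parent_c1 hch]⟩

include hvr hc hch in
lemma ldesc_disjoint : Disjoint (T.Ldesc c₀) (T.Ldesc c₁) := by
  rw [Finset.disjoint_left]
  intro i hi0 hi1
  rw [T.mem_Ldesc_iff] at hi0 hi1
  rcases T.anc_comparable hi0.2 hi1.2 with h | h
  · exact not_anc_sibling T hvr (parent_c0 hch) (parent_c1 hch) hc h
  · exact not_anc_sibling T hvr (parent_c1 hch) (parent_c0 hch) hc.symm h

include hvr hch in
lemma ldesc_union (hvl : ¬ T.IsLeaf v) : T.Ldesc v = T.Ldesc c₀ ∪ T.Ldesc c₁ := by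
  ext i
  simp only [Finset.mem_union, T.mem_Ldesc_iff]
  constructor
  · rintro ⟨hil, hanc⟩
    have hne : i ≠ v := fun h => hvl (h ▸ hil)
    obtain ⟨c, hcmem, hcanc⟩ := T.exists_child_anc hvr hanc hne
    rw [hch] at hcmem
    simp only [Finset.mem_insert, Finset.mem_singleton] at hcmem
    rcases hcmem with rfl | rfl
    · exact Or.inl ⟨hil, hcanc⟩
    · exact Or.inr ⟨hil, hcanc⟩
  · rintro (⟨hil, hanc⟩ | ⟨hil, hanc⟩)
    · exact ⟨hil, T.anc_trans (anc_v_c0 hch) hanc⟩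
    · exact ⟨hil, T.anc_trans (anc_v_c1 hch) hanc⟩

include hvr hc hch in
lemma card_ldesc_add (hvl : ¬ T.IsLeaf v) :
    (T.Ldesc c₀).card + (T.Ldesc c₁).card = (T.Ldesc v).card := by
  rw [ldesc_union hvr hch hvl, Finset.card_union_of_disjoint (ldesc_disjoint hvr hc hch)]

include hch in
lemma comparable_of_comparable_c0 {w : Fin T.n}
    (h : T.Anc w c₀ ∨ T.Anc c₀ w) : T.Anc w v ∨ T.Anc v w := by
  rcases h with h | h
  · rcases anc_parent_cases (parent_c0 hch) h with rfl | h'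
    · exact Or.inr (anc_v_c0 hch)
    · exact Or.inl h'
  · exact Or.inr (T.anc_trans (anc_v_c0 hch) h)

include hch in
lemma comparable_of_comparable_c1 {w : Fin T.n}
    (h : T.Anc w c₁ ∨ T.Anc c₁ w) : T.Anc w v ∨ T.Anc v w := by
  rcases h with h | h
  · rcases anc_parent_cases (parent_c1 hch) h with rfl | h'
    · exact Or.inr (anc_v_c1 hch)
    · exact Or.inl h'
  · exact Or.inr (T.anc_trans (anc_v_c1 hch) h)

end Children

/-- Conversion: sums over the leaf subtype restricted to descendants of `w`
equal sums over `Ldesc w`. -/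
lemma sum_leaf_ite (w : Fin T.n) (F : Fin T.n → ℝ) :
    ∑ j : T.Leaf, (if T.Anc w j.1 then F j.1 else 0) = ∑ i ∈ T.Ldesc w, F i := by
  rw [show T.Ldesc w = T.leaves.filter (fun i => T.Anc w i) from rfl, Finset.sum_filter]
  exact (Finset.sum_coe_sort T.leaves (fun i => if T.Anc w i then F i else 0))

lemma sum_leaf_eq (G : Fin T.n → ℝ) :
    ∑ j : T.Leaf, G j.1 = ∑ i ∈ T.leaves, G i :=
  Finset.sum_coe_sort T.leaves G

end RTree

namespace RTree

/-- The positive value of the Haar-like wavelet at `v` on `L(c₀)`. -/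
def a0 (T : RTree) (v c₀ c₁ : Fin T.n) : ℝ :=
  Real.sqrt (((T.Ldesc c₁).card : ℝ) / (((T.Ldesc c₀).card : ℝ) * ((T.Ldesc v).card : ℝ)))

/-- The Haar-like wavelet at `v` as a function on all vertices. -/
def PhiF (T : RTree) (v c₀ c₁ : Fin T.n) : Fin T.n → ℝ := fun i =>
  if i ∈ T.Ldesc c₀ then T.a0 v c₀ c₁
  else if i ∈ T.Ldesc c₁ then -(T.a0 v c₁ c₀) else 0

lemma sqrt_helper {a b c : ℝ} (ha : 0 < a) (hc : 0 < c) :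
    a * Real.sqrt (b / (a * c)) = Real.sqrt (a * b / c) := by
  rw [show a * b / c = a ^ 2 * (b / (a * c)) by field_simp,
    Real.sqrt_mul (sq_nonneg a), Real.sqrt_sq ha.le]

variable {T : RTree} {ℓ : Fin T.n → ℝ} {v c₀ c₁ : Fin T.n}

section Phi

variable (hvr : v ≠ T.root) (hvl : ¬ T.IsLeaf v) (hc : c₀ ≠ c₁)
  (hch : T.children v = {c₀, c₁})

lemma n0_pos : 0 < ((T.Ldesc c₀).card : ℝ) := by
  exact_mod_cast Finset.card_pos.2 (T.ldesc_nonempty c₀)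

lemma nv_pos : 0 < ((T.Ldesc v).card : ℝ) := by
  exact_mod_cast Finset.card_pos.2 (T.ldesc_nonempty v)

lemma a0_nonneg : 0 ≤ T.a0 v c₀ c₁ := Real.sqrt_nonneg _

lemma a0_sq : (T.a0 v c₀ c₁) ^ 2 =
    ((T.Ldesc c₁).card : ℝ) / (((T.Ldesc c₀).card : ℝ) * ((T.Ldesc v).card : ℝ)) := by
  rw [a0, Real.sq_sqrt]
  positivity

lemma mul_a0 : ((T.Ldesc c₀).card : ℝ) * T.a0 v c₀ c₁ =
    Real.sqrt (((T.Ldesc c₀).card : ℝ) * ((T.Ldesc c₁).card : ℝ) / ((T.Ldesc v).card : ℝ)) :=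
  sqrt_helper n0_pos nv_pos

lemma balance : ((T.Ldesc c₀).card : ℝ) * T.a0 v c₀ c₁
    = ((T.Ldesc c₁).card : ℝ) * T.a0 v c₁ c₀ := by
  rw [mul_a0, mul_a0, mul_comm ((T.Ldesc c₀).card : ℝ)]

include hvr hc hch in
lemma phiF_c0 {i : Fin T.n} (hi : i ∈ T.Ldesc c₀) : T.PhiF v c₀ c₁ i = T.a0 v c₀ c₁ :=
  if_pos hi

include hvr hc hch in
lemma phiF_c1 {i : Fin T.n} (hi : i ∈ T.Ldesc c₁) : T.PhiF v c₀ c₁ i = -(T.a0 v c₁ c₀) := by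
  rw [PhiF, if_neg, if_pos hi]
  exact fun h0 => (Finset.disjoint_left.1 (ldesc_disjoint hvr hc hch)) h0 hi

lemma phiF_out {i : Fin T.n} (h0 : i ∉ T.Ldesc c₀) (h1 : i ∉ T.Ldesc c₁) :
    T.PhiF v c₀ c₁ i = 0 := by
  rw [PhiF, if_neg h0, if_neg h1]

/-- The inner product of `δ_w` with the wavelet, as a sum over `Ldesc w`. -/
lemma IP_formula (w : Fin T.n) :
    ∑ j : T.Leaf, T.delta w j * T.PhiF v c₀ c₁ j.1 = ∑ i ∈ T.Ldesc w, T.PhiF v c₀ c₁ i := by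
  rw [← T.sum_leaf_ite w (T.PhiF v c₀ c₁)]
  refine Finset.sum_congr rfl fun j _ => ?_
  rw [delta]
  split_ifs <;> ring

include hvr hc hch in
lemma IP_c0 {w : Fin T.n} (h : T.Anc c₀ w) :
    ∑ i ∈ T.Ldesc w, T.PhiF v c₀ c₁ i = ((T.Ldesc w).card : ℝ) * T.a0 v c₀ c₁ := by
  rw [Finset.sum_congr rfl (fun i hi => ?_), Finset.sum_const, nsmul_eq_mul]
  rw [T.mem_Ldesc_iff] at hi
  exact phiF_c0 hvr hc hch (T.mem_Ldesc_iff.2 ⟨hi.1, T.anc_trans h hi.2⟩)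

include hvr hc hch in
lemma IP_c1 {w : Fin T.n} (h : T.Anc c₁ w) :
    ∑ i ∈ T.Ldesc w, T.PhiF v c₀ c₁ i = ((T.Ldesc w).card : ℝ) * (-(T.a0 v c₁ c₀)) := by
  rw [Finset.sum_congr rfl (fun i hi => ?_), Finset.sum_const, nsmul_eq_mul]
  rw [T.mem_Ldesc_iff] at hi
  exact phiF_c1 hvr hc hch (T.mem_Ldesc_iff.2 ⟨hi.1, T.anc_trans h hi.2⟩)

include hvr hvl hc hch in
lemma IP_above {w : Fin T.n} (h : T.Anc w v) :
    ∑ i ∈ T.Ldesc w, T.PhiF v c₀ c₁ i = 0 := by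
  have hsub : T.Ldesc c₀ ∪ T.Ldesc c₁ ⊆ T.Ldesc w := by
    rw [← ldesc_union hvr hch hvl]
    intro i hi
    rw [T.mem_Ldesc_iff] at hi ⊢
    exact ⟨hi.1, T.anc_trans h hi.2⟩
  rw [← Finset.sum_subset hsub (fun i _ hi => ?_)]
  · rw [Finset.sum_union (ldesc_disjoint hvr hc hch),
      IP_c0 hvr hc hch (T.anc_refl c₀), IP_c1 hvr hc hch (T.anc_refl c₁),
      mul_neg, balance]
    ring
  · simp only [Finset.mem_union, not_or] at hi
    exact phiF_out hi.1 hi.2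

include hvr hvl hc hch in
lemma IP_incomp {w : Fin T.n} (h1 : ¬ T.Anc w v) (h2 : ¬ T.Anc v w) :
    ∑ i ∈ T.Ldesc w, T.PhiF v c₀ c₁ i = 0 := by
  refine Finset.sum_eq_zero fun i hi => ?_
  rw [T.mem_Ldesc_iff] at hi
  refine phiF_out (fun h0 => ?_) (fun h0 => ?_)
  · rw [T.mem_Ldesc_iff] at h0
    rcases comparable_of_comparable_c0 hch (T.anc_comparable hi.2 h0.2) with h | h
    · exact h1 h
    · exact h2 h
  · rw [T.mem_Ldesc_iff] at h0
    rcases comparable_of_comparable_c1 hch (T.anc_comparable hi.2 h0.2) with h | h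
    · exact h1 h
    · exact h2 h

end Phi

lemma cov_apply (i j : T.Leaf) : T.cov ℓ i j =
    ∑ w ∈ Finset.univ.filter (fun w => w ≠ T.root), ℓ w * (T.delta w i * T.delta w j) := by
  simp [cov, Matrix.sum_apply, Matrix.vecMulVec_apply, smul_eq_mul]

lemma mulVec_eq (x : T.Leaf → ℝ) (i : T.Leaf) :
    (T.cov ℓ).mulVec x i = ∑ w ∈ Finset.univ.filter (fun w => w ≠ T.root),
      ℓ w * T.delta w i * (∑ j : T.Leaf, T.delta w j * x j) := by
  simp only [Matrix.mulVec, dotProduct, cov_apply, Finset.sum_mul]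
  rw [Finset.sum_comm]
  refine Finset.sum_congr rfl fun w _ => ?_
  rw [Finset.mul_sum]
  refine Finset.sum_congr rfl fun j _ => by ring

lemma lstar_eq {i : Fin T.n} (hi : T.Anc v i) : T.lstar ℓ i v =
    ∑ w ∈ Finset.univ.filter (fun w => w ≠ T.root ∧ T.Anc w i ∧ ¬ T.Anc w v),
      ((T.Ldesc w).card : ℝ) * ℓ w := by
  rw [lstar]
  congr 1
  refine Finset.filter_congr fun w _ => ?_
  constructor
  · rintro ⟨hw, (h | h)⟩
    · exact ⟨hw, h⟩
    · exact absurd (T.anc_trans h.1 hi) h.2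
  · rintro ⟨hw, h⟩
    exact ⟨hw, Or.inl h⟩

end RTree

namespace RTree

variable {T : RTree} {ℓ : Fin T.n → ℝ} {v c₀ c₁ : Fin T.n}

section Key

variable (hvr : v ≠ T.root) (hvl : ¬ T.IsLeaf v) (hc : c₀ ≠ c₁)
  (hch : T.children v = {c₀, c₁})

lemma leaf_isLeaf (i : T.Leaf) : T.IsLeaf i.1 := by
  have := i.2
  simp only [leaves, Finset.mem_filter] at this
  exact this.2

include hvr hvl hc hch in
lemma key_identity (i : T.Leaf) :
    (T.cov ℓ).mulVec (fun j => T.PhiF v c₀ c₁ j.1) i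
      = T.lstar ℓ i.1 v * T.PhiF v c₀ c₁ i.1 := by
  rw [mulVec_eq]
  by_cases hi0 : i.1 ∈ T.Ldesc c₀
  · have hanc0 : T.Anc c₀ i.1 := (T.mem_Ldesc_iff.1 hi0).2
    have hancv : T.Anc v i.1 := T.anc_trans (anc_v_c0 hch) hanc0
    rw [phiF_c0 hvr hc hch hi0, lstar_eq hancv, Finset.sum_mul,
      Finset.sum_filter, Finset.sum_filter]
    refine Finset.sum_congr rfl fun w _ => ?_
    by_cases hwr : w ≠ T.root
    · rw [if_pos hwr, IP_formula]
      by_cases hwi : T.Anc w i.1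
      · by_cases hwv : T.Anc w v
        · rw [IP_above hvr hvl hc hch hwv, if_neg (fun h => h.2.2 hwv)]
          ring
        · have hvw : T.Anc v w := by
            rcases T.anc_comparable hwi hancv with h | h
            · exact absurd h hwv
            · exact h
          have hwne : w ≠ v := fun h => hwv (h ▸ T.anc_refl v)
          obtain ⟨c, hcm, hcw⟩ := T.exists_child_anc hvr hvw hwne
          rw [hch] at hcm
          simp only [Finset.mem_insert, Finset.mem_singleton] at hcm
          rcases hcm with rfl | rfl
          · rw [IP_c0 hvr hc hch hcw, if_pos ⟨hwr, hwi, hwv⟩]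
            simp only [delta, if_pos hwi]
            ring
          · exfalso
            have : i.1 ∈ T.Ldesc c := T.mem_Ldesc_iff.2 ⟨leaf_isLeaf i, T.anc_trans hcw hwi⟩
            exact (Finset.disjoint_left.1 (ldesc_disjoint hvr hc hch)) hi0 this
      · rw [if_neg (fun h : _ ∧ _ ∧ _ => hwi h.2.1)]
        simp only [delta, if_neg hwi]
        ring
    · rw [if_neg hwr, if_neg (fun h : _ ∧ _ => hwr h.1)]
  · by_cases hi1 : i.1 ∈ T.Ldesc c₁
    · have hanc1 : T.Anc c₁ i.1 := (T.mem_Ldesc_iff.1 hi1).2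
      have hancv : T.Anc v i.1 := T.anc_trans (anc_v_c1 hch) hanc1
      rw [phiF_c1 hvr hc hch hi1, lstar_eq hancv, Finset.sum_mul,
        Finset.sum_filter, Finset.sum_filter]
      refine Finset.sum_congr rfl fun w _ => ?_
      by_cases hwr : w ≠ T.root
      · rw [if_pos hwr, IP_formula]
        by_cases hwi : T.Anc w i.1
        · by_cases hwv : T.Anc w v
          · rw [IP_above hvr hvl hc hch hwv, if_neg (fun h => h.2.2 hwv)]
            ring
          · have hvw : T.Anc v w := by
              rcases T.anc_comparable hwi hancv with h | h
              · exact absurd h hwv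
              · exact h
            have hwne : w ≠ v := fun h => hwv (h ▸ T.anc_refl v)
            obtain ⟨c, hcm, hcw⟩ := T.exists_child_anc hvr hvw hwne
            rw [hch] at hcm
            simp only [Finset.mem_insert, Finset.mem_singleton] at hcm
            rcases hcm with rfl | rfl
            · exfalso
              have : i.1 ∈ T.Ldesc c := T.mem_Ldesc_iff.2 ⟨leaf_isLeaf i, T.anc_trans hcw hwi⟩
              exact (Finset.disjoint_left.1 (ldesc_disjoint hvr hc hch)) this hi1
            · rw [IP_c1 hvr hc hch hcw, if_pos ⟨hwr, hwi, hwv⟩]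
              simp only [delta, if_pos hwi]
              ring
        · rw [if_neg (fun h : _ ∧ _ ∧ _ => hwi h.2.1)]
          simp only [delta, if_neg hwi]
          ring
      · rw [if_neg hwr, if_neg (fun h : _ ∧ _ => hwr h.1)]
    · rw [phiF_out hi0 hi1, mul_zero]
      refine Finset.sum_eq_zero fun w hw => ?_
      simp only [Finset.mem_filter] at hw
      rw [IP_formula]
      by_cases hwi : T.Anc w i.1
      · by_cases hwv : T.Anc w v
        · rw [IP_above hvr hvl hc hch hwv, mul_zero]
        · by_cases hvw : T.Anc v w
          · exfalso
            have hiv : i.1 ∈ T.Ldesc v :=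
              T.mem_Ldesc_iff.2 ⟨leaf_isLeaf i, T.anc_trans hvw hwi⟩
            rw [ldesc_union hvr hch hvl, Finset.mem_union] at hiv
            rcases hiv with h | h
            · exact hi0 h
            · exact hi1 h
          · rw [IP_incomp hvr hvl hc hch hwv hvw, mul_zero]
      · simp only [delta, if_neg hwi]
        ring

include hvr hc hch in
lemma sum_split (G : Fin T.n → ℝ)
    (hG : ∀ i, i ∉ T.Ldesc c₀ → i ∉ T.Ldesc c₁ → G i = 0) :
    ∑ j : T.Leaf, G j.1 = ∑ i ∈ T.Ldesc c₀, G i + ∑ i ∈ T.Ldesc c₁, G i := by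
  rw [sum_leaf_eq, ← Finset.sum_union (ldesc_disjoint hvr hc hch)]
  symm
  apply Finset.sum_subset
  · intro i hi
    rw [Finset.mem_union] at hi
    rcases hi with h | h
    · exact Finset.filter_subset _ _ h
    · exact Finset.filter_subset _ _ h
  · intro i _ hi
    rw [Finset.mem_union, not_or] at hi
    exact hG i hi.1 hi.2

end Key

end RTree

lemma sum_sq_shift {α : Type*} (s : Finset α) (g : α → ℝ) (a c : ℝ)
    (ha : ∑ i ∈ s, g i = (s.card : ℝ) * a) :
    ∑ i ∈ s, (g i - c) ^ 2 = (∑ i ∈ s, (g i - a) ^ 2) + (s.card : ℝ) * (a - c) ^ 2 := by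
  have h : ∀ i ∈ s, (g i - c) ^ 2
      = (g i - a) ^ 2 + (2 * (a - c)) * g i + ((a - c) ^ 2 - 2 * (a - c) * a) :=
    fun i _ => by ring
  rw [Finset.sum_congr rfl h, Finset.sum_add_distrib, Finset.sum_add_distrib,
    ← Finset.mul_sum, ha, Finset.sum_const, nsmul_eq_mul]
  ring

theorem lambda_v_spectral_estimate' (T : RTree) (ℓ : Fin T.n → ℝ)
    (φ : Fin T.n → T.Leaf → ℝ)
    (v : Fin T.n) (hvl : ¬ T.IsLeaf v) (hvr : v ≠ T.root)
    (c₀ c₁ : Fin T.n) (hc : c₀ ≠ c₁) (hch : T.children v = {c₀, c₁})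
    (hφv : ∀ i : T.Leaf, φ v i =
      if i.1 ∈ T.Ldesc c₀ then
        Real.sqrt (((T.Ldesc c₁).card : ℝ) / (((T.Ldesc c₀).card : ℝ) * ((T.Ldesc v).card : ℝ)))
      else if i.1 ∈ T.Ldesc c₁ then
        - Real.sqrt (((T.Ldesc c₀).card : ℝ) / (((T.Ldesc c₁).card : ℝ) * ((T.Ldesc v).card : ℝ)))
      else 0) :
    let S := T.cov ℓ
    let lam : ℝ := ∑ j : T.Leaf, ∑ i : T.Leaf, φ v j * S j i * φ v i
    let ρ₀ : ℝ := ((T.Ldesc c₀).card : ℝ) / ((T.Ldesc v).card : ℝ)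
    let ρ₁ : ℝ := ((T.Ldesc c₁).card : ℝ) / ((T.Ldesc v).card : ℝ)
    let avg₀ : ℝ := (∑ i ∈ T.Ldesc c₀, T.lstar ℓ i v) / ((T.Ldesc c₀).card : ℝ)
    let avg₁ : ℝ := (∑ i ∈ T.Ldesc c₁, T.lstar ℓ i v) / ((T.Ldesc c₁).card : ℝ)
    let var₀ : ℝ := (∑ i ∈ T.Ldesc c₀, (T.lstar ℓ i v - avg₀) ^ 2) / ((T.Ldesc c₀).card : ℝ)
    let var₁ : ℝ := (∑ i ∈ T.Ldesc c₁, (T.lstar ℓ i v - avg₁) ^ 2) / ((T.Ldesc c₁).card : ℝ)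
    lam = ρ₁ * avg₀ + ρ₀ * avg₁ ∧
    (∑ j : T.Leaf, (S.mulVec (φ v) j - lam * φ v j) ^ 2)
      = ρ₀ * ρ₁ * (avg₁ - avg₀) ^ 2 + ρ₁ * var₀ + ρ₀ * var₁ ∧
    ∃ μ ∈ spectrum ℝ S, |μ - lam| ≤
      Real.sqrt (∑ j : T.Leaf, (S.mulVec (φ v) j - lam * φ v j) ^ 2) := by
  intro S lam ρ₀ ρ₁ avg₀ avg₁ var₀ var₁
  -- basic abbreviations and facts
  have hφfun : φ v = fun j : T.Leaf => T.PhiF v c₀ c₁ j.1 := by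
    funext j
    rw [hφv j]
    simp only [RTree.PhiF, RTree.a0]
  have hkey : ∀ i : T.Leaf, S.mulVec (φ v) i = T.lstar ℓ i.1 v * φ v i := by
    intro i
    rw [hφfun]
    exact RTree.key_identity hvr hvl hc hch i
  have hn0 : (0:ℝ) < ((T.Ldesc c₀).card : ℝ) := by
    exact_mod_cast Finset.card_pos.2 (T.ldesc_nonempty c₀)
  have hn1 : (0:ℝ) < ((T.Ldesc c₁).card : ℝ) := by
    exact_mod_cast Finset.card_pos.2 (T.ldesc_nonempty c₁)
  have hnv : (0:ℝ) < ((T.Ldesc v).card : ℝ) := by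
    exact_mod_cast Finset.card_pos.2 (T.ldesc_nonempty v)
  have hsum : ((T.Ldesc c₀).card : ℝ) + ((T.Ldesc c₁).card : ℝ) = ((T.Ldesc v).card : ℝ) := by
    exact_mod_cast RTree.card_ldesc_add hvr hc hch hvl
  have hA0sq : (T.a0 v c₀ c₁) ^ 2
      = ((T.Ldesc c₁).card : ℝ) / (((T.Ldesc c₀).card : ℝ) * ((T.Ldesc v).card : ℝ)) :=
    RTree.a0_sq
  have hA1sq : (T.a0 v c₁ c₀) ^ 2
      = ((T.Ldesc c₀).card : ℝ) / (((T.Ldesc c₁).card : ℝ) * ((T.Ldesc v).card : ℝ)) :=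
    RTree.a0_sq
  -- splitting sums against the squared wavelet
  have hsplit : ∀ F : Fin T.n → ℝ,
      ∑ j : T.Leaf, F j.1 * (T.PhiF v c₀ c₁ j.1) ^ 2
        = (∑ i ∈ T.Ldesc c₀, F i) * (T.a0 v c₀ c₁) ^ 2
          + (∑ i ∈ T.Ldesc c₁, F i) * (T.a0 v c₁ c₀) ^ 2 := by
    intro F
    refine (RTree.sum_split hvr hc hch (fun i => F i * (T.PhiF v c₀ c₁ i) ^ 2)
      (fun i h0 h1 => by simp [RTree.phiF_out h0 h1])).trans ?_
    rw [Finset.sum_mul, Finset.sum_mul]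
    congr 1
    · refine Finset.sum_congr rfl fun i hi => ?_
      rw [RTree.phiF_c0 hvr hc hch hi]
    · refine Finset.sum_congr rfl fun i hi => ?_
      rw [RTree.phiF_c1 hvr hc hch hi]
      ring
  -- the diagonal entry
  have hlam2 : lam = (∑ i ∈ T.Ldesc c₀, T.lstar ℓ i v) * (T.a0 v c₀ c₁) ^ 2
      + (∑ i ∈ T.Ldesc c₁, T.lstar ℓ i v) * (T.a0 v c₁ c₀) ^ 2 := by
    have h1 : lam = ∑ j : T.Leaf, T.lstar ℓ j.1 v * (T.PhiF v c₀ c₁ j.1) ^ 2 := by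
      have h0 : lam = ∑ j : T.Leaf, ∑ i : T.Leaf, φ v j * S j i * φ v i := rfl
      rw [h0]
      refine Finset.sum_congr rfl fun j _ => ?_
      have hj : ∑ i : T.Leaf, φ v j * S j i * φ v i = φ v j * S.mulVec (φ v) j := by
        simp only [Matrix.mulVec, dotProduct, Finset.mul_sum]
        exact Finset.sum_congr rfl fun i _ => by ring
      rw [hj, hkey j]
      simp only [hφfun]
      ring
    rw [h1]
    exact hsplit fun i => T.lstar ℓ i v
  have hlameq : lam = ρ₁ * avg₀ + ρ₀ * avg₁ := by
    have hρ₀ : ρ₀ = ((T.Ldesc c₀).card : ℝ) / ((T.Ldesc v).card : ℝ) := rfl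
    have hρ₁ : ρ₁ = ((T.Ldesc c₁).card : ℝ) / ((T.Ldesc v).card : ℝ) := rfl
    have ha₀ : avg₀ = (∑ i ∈ T.Ldesc c₀, T.lstar ℓ i v) / ((T.Ldesc c₀).card : ℝ) := rfl
    have ha₁ : avg₁ = (∑ i ∈ T.Ldesc c₁, T.lstar ℓ i v) / ((T.Ldesc c₁).card : ℝ) := rfl
    rw [hlam2, hA0sq, hA1sq, hρ₀, hρ₁, ha₀, ha₁]
    field_simp
  refine ⟨hlameq, ?_, ?_⟩
  -- the residual norm computation
  · have hs0 : ∑ i ∈ T.Ldesc c₀, T.lstar ℓ i v = ((T.Ldesc c₀).card : ℝ) * avg₀ := by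
      have ha₀ : avg₀ = (∑ i ∈ T.Ldesc c₀, T.lstar ℓ i v) / ((T.Ldesc c₀).card : ℝ) := rfl
      rw [ha₀]
      field_simp
    have hs1 : ∑ i ∈ T.Ldesc c₁, T.lstar ℓ i v = ((T.Ldesc c₁).card : ℝ) * avg₁ := by
      have ha₁ : avg₁ = (∑ i ∈ T.Ldesc c₁, T.lstar ℓ i v) / ((T.Ldesc c₁).card : ℝ) := rfl
      rw [ha₁]
      rw [mul_div_assoc']; exact (mul_div_cancel_left₀ _ hn1.ne').symm
    have e1 : ∑ j : T.Leaf, (S.mulVec (φ v) j - lam * φ v j) ^ 2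
        = (∑ i ∈ T.Ldesc c₀, (T.lstar ℓ i v - lam) ^ 2) * (T.a0 v c₀ c₁) ^ 2
          + (∑ i ∈ T.Ldesc c₁, (T.lstar ℓ i v - lam) ^ 2) * (T.a0 v c₁ c₀) ^ 2 := by
      refine Eq.trans ?_ (hsplit fun i => (T.lstar ℓ i v - lam) ^ 2)
      refine Finset.sum_congr rfl fun j _ => ?_
      rw [hkey j]
      simp only [hφfun]
      ring
    rw [e1, sum_sq_shift _ _ avg₀ lam hs0, sum_sq_shift _ _ avg₁ lam hs1, hA0sq, hA1sq]
    have hρ₀ : ρ₀ = ((T.Ldesc c₀).card : ℝ) / ((T.Ldesc v).card : ℝ) := rfl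
    have hρ₁ : ρ₁ = ((T.Ldesc c₁).card : ℝ) / ((T.Ldesc v).card : ℝ) := rfl
    have hv₀ : var₀ = (∑ i ∈ T.Ldesc c₀, (T.lstar ℓ i v - avg₀) ^ 2) / ((T.Ldesc c₀).card : ℝ) :=
      rfl
    have hv₁ : var₁ = (∑ i ∈ T.Ldesc c₁, (T.lstar ℓ i v - avg₁) ^ 2) / ((T.Ldesc c₁).card : ℝ) :=
      rfl
    rw [hρ₀, hρ₁, hv₀, hv₁, hlameq, hρ₀, hρ₁, ← hsum]
    have h0' := hn0.ne'
    have h1' := hn1.ne'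
    have hs' : ((T.Ldesc c₀).card : ℝ) + ((T.Ldesc c₁).card : ℝ) ≠ 0 := (add_pos hn0 hn1).ne'
    field_simp
    ring
  -- the spectral estimate
  · haveI : Nonempty T.Leaf := by
      obtain ⟨i, hi⟩ := T.ldesc_nonempty v
      exact ⟨⟨i, (Finset.mem_filter.1 hi).1⟩⟩
    have hnorm : ∑ j : T.Leaf, (φ v j) ^ 2 = 1 := by
      calc ∑ j : T.Leaf, (φ v j) ^ 2
          = ∑ j : T.Leaf, (fun _ : Fin T.n => (1:ℝ)) j.1 * (T.PhiF v c₀ c₁ j.1) ^ 2 := by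
            refine Finset.sum_congr rfl fun j _ => ?_
            simp only [hφfun, one_mul]
        _ = (∑ _i ∈ T.Ldesc c₀, (1:ℝ)) * (T.a0 v c₀ c₁) ^ 2
            + (∑ _i ∈ T.Ldesc c₁, (1:ℝ)) * (T.a0 v c₁ c₀) ^ 2 := hsplit (fun _ => (1:ℝ))
        _ = 1 := by
            rw [Finset.sum_const, Finset.sum_const, nsmul_eq_mul, nsmul_eq_mul, mul_one,
              mul_one, hA0sq, hA1sq, ← hsum]
            have h0' := hn0.ne'
            have h1' := hn1.ne'
            have hs' : ((T.Ldesc c₀).card : ℝ) + ((T.Ldesc c₁).card : ℝ) ≠ 0 := by positivity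
            field_simp
            ring
    have hS : S.IsHermitian := by
      refine Matrix.IsHermitian.ext fun i j => ?_
      rw [star_trivial]
      show T.cov ℓ j i = T.cov ℓ i j
      rw [RTree.cov_apply, RTree.cov_apply]
      exact Finset.sum_congr rfl fun w _ => by ring
    set B := hS.eigenvectorBasis with hB
    set μ := hS.eigenvalues with hμ
    obtain ⟨i₀, -, hmin⟩ :=
      Finset.exists_min_image Finset.univ (fun i => |μ i - lam|) Finset.univ_nonempty
    refine ⟨μ i₀, hS.eigenvalues_mem_spectrum_real i₀, ?_⟩
    have normsq : ∀ z : EuclideanSpace ℝ T.Leaf, ‖z‖ ^ 2 = ∑ i, z i ^ 2 := by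
      intro z
      rw [EuclideanSpace.norm_eq, Real.sq_sqrt (by positivity)]
      exact Finset.sum_congr rfl fun i _ => by rw [Real.norm_eq_abs, sq_abs]
    have hrepr : ∀ (z : EuclideanSpace ℝ T.Leaf) i, B.repr z i = ∑ j, B i j * z j := by
      intro z i
      rw [OrthonormalBasis.repr_apply_apply]
      simp [PiLp.inner_apply, RCLike.inner_apply]
      exact Finset.sum_congr rfl fun j _ => mul_comm _ _
    have hparseval : ∀ z : EuclideanSpace ℝ T.Leaf,
        ∑ i, (B.repr z i) ^ 2 = ∑ j, z j ^ 2 := by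
      intro z
      calc ∑ i, (B.repr z i) ^ 2 = ‖B.repr z‖ ^ 2 := (normsq _).symm
        _ = ‖z‖ ^ 2 := by rw [LinearIsometryEquiv.norm_map]
        _ = ∑ j, z j ^ 2 := normsq z
    have hentry : ∀ a b : T.Leaf, S a b = S b a := by
      intro a b
      show T.cov ℓ a b = T.cov ℓ b a
      rw [RTree.cov_apply, RTree.cov_apply]
      exact Finset.sum_congr rfl fun w _ => by ring
    have hmove : ∀ u w : T.Leaf → ℝ,
        ∑ j, u j * S.mulVec w j = ∑ j, S.mulVec u j * w j := by
      intro u w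
      simp only [Matrix.mulVec, dotProduct, Finset.mul_sum, Finset.sum_mul]
      rw [Finset.sum_comm]
      exact Finset.sum_congr rfl fun j _ => Finset.sum_congr rfl fun k _ => by
        rw [hentry j k]; ring
    have heig : ∀ i, S.mulVec (fun j => B i j) = fun j => μ i * B i j := by
      intro i
      have h := hS.mulVec_eigenvectorBasis i
      funext j
      calc S.mulVec (fun j => B i j) j = (μ i • ⇑(B i)) j := by rw [← h]
        _ = μ i * B i j := by simp
    set x : EuclideanSpace ℝ T.Leaf := WithLp.toLp 2 (φ v) with hx
    set r : EuclideanSpace ℝ T.Leaf :=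
      WithLp.toLp 2 (fun j => S.mulVec (φ v) j - lam * φ v j : T.Leaf → ℝ) with hr
    have hBr : ∀ i, B.repr r i = (μ i - lam) * B.repr x i := by
      intro i
      rw [hrepr, hrepr]
      have h1 : ∑ j, B i j * S.mulVec (φ v) j = μ i * ∑ j, B i j * φ v j := by
        rw [hmove (fun j => B i j) (φ v), heig i]
        rw [Finset.mul_sum]
        exact Finset.sum_congr rfl fun j _ => by ring
      have h2 : ∀ j, B i j * r j = B i j * S.mulVec (φ v) j - lam * (B i j * φ v j) := by
        intro j
        have : r j = S.mulVec (φ v) j - lam * φ v j := rfl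
        rw [this]; ring
      calc ∑ j, B i j * r j
          = ∑ j, (B i j * S.mulVec (φ v) j - lam * (B i j * φ v j)) :=
            Finset.sum_congr rfl fun j _ => h2 j
        _ = (∑ j, B i j * S.mulVec (φ v) j) - lam * ∑ j, B i j * φ v j := by
            rw [Finset.sum_sub_distrib, Finset.mul_sum]
        _ = μ i * (∑ j, B i j * φ v j) - lam * ∑ j, B i j * φ v j := by rw [h1]
        _ = (μ i - lam) * ∑ j, B i j * x j := by ring
    have hxsum : ∑ i, (B.repr x i) ^ 2 = 1 := by
      rw [hparseval]
      exact hnorm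
    have hlower : (μ i₀ - lam) ^ 2 ≤ ∑ j : T.Leaf, (S.mulVec (φ v) j - lam * φ v j) ^ 2 := by
      have e : ∑ j : T.Leaf, (S.mulVec (φ v) j - lam * φ v j) ^ 2
          = ∑ i, ((μ i - lam) * B.repr x i) ^ 2 := by
        calc ∑ j : T.Leaf, (S.mulVec (φ v) j - lam * φ v j) ^ 2
            = ∑ j, r j ^ 2 := rfl
          _ = ∑ i, (B.repr r i) ^ 2 := (hparseval r).symm
          _ = ∑ i, ((μ i - lam) * B.repr x i) ^ 2 :=
              Finset.sum_congr rfl fun i _ => by rw [hBr i]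
      rw [e]
      calc (μ i₀ - lam) ^ 2 = (μ i₀ - lam) ^ 2 * ∑ i, (B.repr x i) ^ 2 := by
            rw [hxsum, mul_one]
        _ = ∑ i, (μ i₀ - lam) ^ 2 * (B.repr x i) ^ 2 := Finset.mul_sum _ _ _
        _ ≤ ∑ i, ((μ i - lam) * B.repr x i) ^ 2 := by
            refine Finset.sum_le_sum fun i _ => ?_
            rw [mul_pow]
            refine mul_le_mul_of_nonneg_right ?_ (sq_nonneg _)
            rw [← sq_abs (μ i₀ - lam), ← sq_abs (μ i - lam)]
            exact pow_le_pow_left₀ (abs_nonneg _) (hmin i (Finset.mem_univ i)) 2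
    rw [← Real.sqrt_sq_eq_abs]
    exact Real.sqrt_le_sqrt hlower


/-- For a non-root internal node `v` with children `c₀ = v0`, `c₁ = v1`, the diagonal
entry `λ_v = φ_v' S φ_v` equals `ρ_{v1} avg(ℓ*(·,v); L(v0)) + ρ_{v0} avg(ℓ*(·,v); L(v1))`,
`‖(S - λ_v)φ_v‖₂²` has the stated expression in terms of averages and variances, and
`dist(λ_v, σ(S)) ≤ ‖(S - λ_v)φ_v‖₂`. -/
theorem lambda_v_spectral_estimate (T : RTree) (hT : T.IsORB) (ℓ : Fin T.n → ℝ)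
    (hℓ : ∀ v, 0 ≤ ℓ v) (hℓpos : ∀ v, T.IsLeaf v → 0 < ℓ v)
    (φ : Fin T.n → T.Leaf → ℝ) (hφ : T.IsHaarLike φ)
    (v : Fin T.n) (hv : v ∈ T.internal) (hvr : v ≠ T.root)
    (c₀ c₁ : Fin T.n) (hc : c₀ ≠ c₁) (hch : T.children v = {c₀, c₁})
    (hφv : ∀ i : T.Leaf, φ v i =
      if i.1 ∈ T.Ldesc c₀ then
        Real.sqrt (((T.Ldesc c₁).card : ℝ) / (((T.Ldesc c₀).card : ℝ) * ((T.Ldesc v).card : ℝ)))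
      else if i.1 ∈ T.Ldesc c₁ then
        - Real.sqrt (((T.Ldesc c₀).card : ℝ) / (((T.Ldesc c₁).card : ℝ) * ((T.Ldesc v).card : ℝ)))
      else 0) :
    let S := T.cov ℓ
    let lam : ℝ := ∑ j : T.Leaf, ∑ i : T.Leaf, φ v j * S j i * φ v i
    let ρ₀ : ℝ := ((T.Ldesc c₀).card : ℝ) / ((T.Ldesc v).card : ℝ)
    let ρ₁ : ℝ := ((T.Ldesc c₁).card : ℝ) / ((T.Ldesc v).card : ℝ)
    let avg₀ : ℝ := (∑ i ∈ T.Ldesc c₀, T.lstar ℓ i v) / ((T.Ldesc c₀).card : ℝ)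
    let avg₁ : ℝ := (∑ i ∈ T.Ldesc c₁, T.lstar ℓ i v) / ((T.Ldesc c₁).card : ℝ)
    let var₀ : ℝ := (∑ i ∈ T.Ldesc c₀, (T.lstar ℓ i v - avg₀) ^ 2) / ((T.Ldesc c₀).card : ℝ)
    let var₁ : ℝ := (∑ i ∈ T.Ldesc c₁, (T.lstar ℓ i v - avg₁) ^ 2) / ((T.Ldesc c₁).card : ℝ)
    lam = ρ₁ * avg₀ + ρ₀ * avg₁ ∧
    (∑ j : T.Leaf, (S.mulVec (φ v) j - lam * φ v j) ^ 2)
      = ρ₀ * ρ₁ * (avg₁ - avg₀) ^ 2 + ρ₁ * var₀ + ρ₀ * var₁ ∧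
    ∃ μ ∈ spectrum ℝ S, |μ - lam| ≤
      Real.sqrt (∑ j : T.Leaf, (S.mulVec (φ v) j - lam * φ v j) ^ 2) := by
  have hvl : ¬ T.IsLeaf v := by
    have h := hv
    simp only [RTree.internal, Finset.mem_filter] at h
    exact h.2
  exact lambda_v_spectral_estimate' T ℓ φ v hvl hvr c₀ c₁ hc hch hφv
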